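/- Let I ⊆ ℝ be an interval, t₀ ∈ I, k ∈ ℤ, and let y : I → ℝ be a differentiable function satisfying y'(t) = 2·y(t)²·(sin y(t))² for all t ∈ I. If k·π ≤ y(t₀) ≤ (k+1)·π, then k·π ≤ y(t) ≤ (k+1)·π for all t ∈ I. (The constant solutions t ↦ kπ trap every other solution of this ODE between consecutive multiples of π; in particular every solution is bounded.) -/

import Mathlib

open Set

noncomputable def odeF : ℝ → ℝ := fun x => 2 * x ^ 2 * Real.sin x ^ 2

lemma odeF_hasDerivAt (x : ℝ) :
    HasDerivAt odeF (4 * x * Real.sin x ^ 2 + 4 * x ^ 2 * Real.sin x * Real.cos x) x := by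
  have h1 : HasDerivAt (fun x : ℝ => 2 * x ^ 2) (4 * x) x := by
    exact ((hasDerivAt_pow 2 x).const_mul (2:ℝ)).congr_deriv (by push_cast; ring)
  have h2 : HasDerivAt (fun x : ℝ => Real.sin x ^ 2) (2 * Real.sin x * Real.cos x) x := by
    simpa [mul_comm, mul_assoc] using ((Real.hasDerivAt_sin x).fun_pow 2)
  have := h1.mul h2
  exact this.congr_deriv (by ring)

lemma odeF_lipschitz (R : ℝ) (hR : 0 ≤ R) :
    LipschitzOnWith (4 * R + 4 * R ^ 2).toNNReal odeF (Icc (-R) R) := by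
  apply (convex_Icc (-R) R).lipschitzOnWith_of_nnnorm_hasDerivWithin_le
    (f' := fun x => 4 * x * Real.sin x ^ 2 + 4 * x ^ 2 * Real.sin x * Real.cos x)
    (fun x _ => (odeF_hasDerivAt x).hasDerivWithinAt)
  intro x hx
  rw [← NNReal.coe_le_coe, coe_nnnorm, Real.coe_toNNReal _ (by positivity)]
  have hx1 : |x| ≤ R := abs_le.2 hx
  have hs : |Real.sin x| ≤ 1 := Real.abs_sin_le_one x
  have hc : |Real.cos x| ≤ 1 := Real.abs_cos_le_one x
  have h1 : |4 * x * Real.sin x ^ 2| ≤ 4 * R := by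
    have e : |4 * x * Real.sin x ^ 2| = 4 * |x| * |Real.sin x| ^ 2 := by
      rw [abs_mul, abs_mul, abs_pow]; norm_num
    rw [e]
    calc 4 * |x| * |Real.sin x| ^ 2 ≤ 4 * R * 1 ^ 2 := by gcongr
      _ = 4 * R := by ring
  have h2 : |4 * x ^ 2 * Real.sin x * Real.cos x| ≤ 4 * R ^ 2 := by
    have e : |4 * x ^ 2 * Real.sin x * Real.cos x|
        = 4 * |x| ^ 2 * |Real.sin x| * |Real.cos x| := by
      rw [abs_mul, abs_mul, abs_mul, abs_pow]; norm_num
    rw [e]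
    calc 4 * |x| ^ 2 * |Real.sin x| * |Real.cos x| ≤ 4 * R ^ 2 * 1 * 1 := by gcongr
      _ = 4 * R ^ 2 := by ring
  calc ‖4 * x * Real.sin x ^ 2 + 4 * x ^ 2 * Real.sin x * Real.cos x‖
      ≤ |4 * x * Real.sin x ^ 2| + |4 * x ^ 2 * Real.sin x * Real.cos x| := abs_add_le _ _
    _ ≤ 4 * R + 4 * R ^ 2 := add_le_add h1 h2

/-- If the solution touches a zero `c` of the RHS at some point of `I`, it is constantly `c`. -/
lemma solution_eq_const (I : Set ℝ) (hI : I.OrdConnected)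
    (y : ℝ → ℝ)
    (hy : ∀ t ∈ I, HasDerivWithinAt y (2 * y t ^ 2 * Real.sin (y t) ^ 2) I t)
    (c : ℝ) (hc : Real.sin c = 0) (t₁ : ℝ) (ht₁ : t₁ ∈ I) (h₁ : y t₁ = c)
    {t : ℝ} (ht : t ∈ I) : y t = c := by
  -- continuity of y on I
  have hcont : ContinuousOn y I := fun s hs => (hy s hs).continuousWithinAt
  have hF0 : odeF c = 0 := by simp [odeF, hc]
  rcases le_total t₁ t with hle | hle
  · -- t₁ ≤ t : use right uniqueness on Icc t₁ t
    have hsub : Icc t₁ t ⊆ I := hI.out ht₁ ht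
    -- bound for y on Icc t₁ t
    obtain ⟨R₀, hR₀⟩ : ∃ R, ∀ s ∈ Icc t₁ t, |y s| ≤ R := by
      obtain ⟨R, hR⟩ := isCompact_Icc.exists_bound_of_continuousOn (hcont.mono hsub)
      exact ⟨R, fun s hs => by simpa [Real.norm_eq_abs] using hR s hs⟩
    set R := max R₀ |c| with hRdef
    have hRnn : 0 ≤ R := le_trans (abs_nonneg c) (le_max_right _ _)
    have hmem : ∀ s ∈ Icc t₁ t, y s ∈ Icc (-R) R := fun s hs =>
      abs_le.1 (le_trans (hR₀ s hs) (le_max_left _ _))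
    have hcmem : c ∈ Icc (-R) R := abs_le.1 (le_max_right _ _)
    have key := ODE_solution_unique_of_mem_Icc_right
      (v := fun _ => odeF) (s := fun _ => Icc (-R) R)
      (fun _ _ => odeF_lipschitz R hRnn)
      (hcont.mono hsub)
      (fun s hs => by
        have h := (hy s (hsub (Ico_subset_Icc_self hs))).mono hsub
        have h' : HasDerivWithinAt y (odeF (y s)) (Icc s t) s :=
          h.mono (Icc_subset_Icc_left hs.1)
        exact h'.mono_of_mem_nhdsWithin (Icc_mem_nhdsGE_of_mem ⟨le_rfl, hs.2⟩))
      (fun s hs => hmem s (Ico_subset_Icc_self hs))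
      (continuousOn_const)
      (fun s hs => by simpa [hF0] using (hasDerivWithinAt_const s (Ici s) c))
      (fun _ _ => hcmem)
      (by simpa [h₁])
    simpa using key (right_mem_Icc.2 hle)
  · -- t ≤ t₁ : use left uniqueness on Icc t t₁
    have hsub : Icc t t₁ ⊆ I := hI.out ht ht₁
    obtain ⟨R₀, hR₀⟩ : ∃ R, ∀ s ∈ Icc t t₁, |y s| ≤ R := by
      obtain ⟨R, hR⟩ := isCompact_Icc.exists_bound_of_continuousOn (hcont.mono hsub)
      exact ⟨R, fun s hs => by simpa [Real.norm_eq_abs] using hR s hs⟩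
    set R := max R₀ |c| with hRdef
    have hRnn : 0 ≤ R := le_trans (abs_nonneg c) (le_max_right _ _)
    have hmem : ∀ s ∈ Icc t t₁, y s ∈ Icc (-R) R := fun s hs =>
      abs_le.1 (le_trans (hR₀ s hs) (le_max_left _ _))
    have hcmem : c ∈ Icc (-R) R := abs_le.1 (le_max_right _ _)
    have key := ODE_solution_unique_of_mem_Icc_left
      (v := fun _ => odeF) (s := fun _ => Icc (-R) R)
      (fun _ _ => odeF_lipschitz R hRnn)
      (hcont.mono hsub)
      (fun s hs => by
        have h := (hy s (hsub (Ioc_subset_Icc_self hs))).mono hsub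
        have h' : HasDerivWithinAt y (odeF (y s)) (Icc t s) s :=
          h.mono (Icc_subset_Icc_right hs.2)
        exact h'.mono_of_mem_nhdsWithin (Icc_mem_nhdsLE_of_mem ⟨hs.1, le_rfl⟩))
      (fun s hs => hmem s (Ioc_subset_Icc_self hs))
      (continuousOn_const)
      (fun s hs => by simpa [hF0] using (hasDerivWithinAt_const s (Iic s) c))
      (fun _ _ => hcmem)
      (by simpa [h₁])
    simpa using key (left_mem_Icc.2 hle)

/-- Solutions of `y' = 2 y² sin²(y)` on an interval are trapped between consecutive
multiples of `π`: if `kπ ≤ y(t₀) ≤ (k+1)π` then the same bounds hold for all `t` in the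
interval. -/
theorem solutions_trapped_between_multiples_of_pi
    (I : Set ℝ) (hI : I.OrdConnected) (t₀ : ℝ) (ht₀ : t₀ ∈ I) (k : ℤ)
    (y : ℝ → ℝ)
    (hy : ∀ t ∈ I, HasDerivWithinAt y (2 * y t ^ 2 * Real.sin (y t) ^ 2) I t)
    (h₀ : (k : ℝ) * Real.pi ≤ y t₀ ∧ y t₀ ≤ ((k : ℝ) + 1) * Real.pi) :
    ∀ t ∈ I, (k : ℝ) * Real.pi ≤ y t ∧ y t ≤ ((k : ℝ) + 1) * Real.pi := by
  have hcont : ContinuousOn y I := fun s hs => (hy s hs).continuousWithinAt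
  have hsin1 : Real.sin ((k : ℝ) * Real.pi) = 0 := by
    simpa using Real.sin_int_mul_pi k
  have hsin2 : Real.sin (((k : ℝ) + 1) * Real.pi) = 0 := by
    have := Real.sin_int_mul_pi (k + 1)
    simpa [add_mul] using this
  intro t ht
  have hsub : uIcc t₀ t ⊆ I := hI.uIcc_subset ht₀ ht
  constructor
  · by_contra h
    push_neg at h
    -- kπ ∈ [y t, y t₀]
    have hmem : (k : ℝ) * Real.pi ∈ Icc (y t) (y t₀) := ⟨le_of_lt h, h₀.1⟩
    have := intermediate_value_uIcc (hcont.mono hsub)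
    obtain ⟨t₁, ht₁, hyt₁⟩ := this (by
      rw [mem_uIcc]; right; exact hmem)
    have := solution_eq_const I hI y hy ((k : ℝ) * Real.pi) hsin1 t₁ (hsub ht₁) hyt₁ ht
    exact h.ne this
  · by_contra h
    push_neg at h
    have hmem : ((k : ℝ) + 1) * Real.pi ∈ Icc (y t₀) (y t) := ⟨h₀.2, le_of_lt h⟩
    obtain ⟨t₁, ht₁, hyt₁⟩ := intermediate_value_uIcc (hcont.mono hsub) (by
      rw [mem_uIcc]; left; exact hmem)
    have := solution_eq_const I hI y hy (((k : ℝ) + 1) * Real.pi) hsin2 t₁ (hsub ht₁) hyt₁ ht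
    exact h.ne' this
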